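/- Let q be a prime power, k ≥ 3, and S a nonempty proper subset of GF(q)^k \ {0} with dim Span(S) ≥ 3. Let D_S = (⋃_{a ∈ S} H_a) \ {0}, where H_a = {x ∈ GF(q)^k : ⟨a,x⟩ = 0}. Then for every hyperplane H of GF(q)^k, the span of D_S ∩ H equals H (i.e., D_S is a vectorial cutting blocking set). -/

import Mathlib

open Module

theorem stmt_6 {F : Type} [Field F] [Fintype F] [DecidableEq F]
    (q k : ℕ) (hq : Fintype.card F = q) (hk : 3 ≤ k)
    (S : Set (Fin k → F)) (hS : S.Nonempty) (hSsub : S ⊂ {x : Fin k → F | x ≠ 0})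
    (hdim : 3 ≤ Module.finrank F (Submodule.span F S))
    (H : Submodule F (Fin k → F)) (hH : Module.finrank F H = k - 1) :
    Submodule.span F
        ({x : Fin k → F | x ≠ 0 ∧ ∃ a ∈ S, ∑ i, a i * x i = 0} ∩ (H : Set (Fin k → F)))
      = H := by
  classical
  set b := Pi.basisFun F (Fin k) with hb
  set e : (Fin k → F) ≃ₗ[F] Module.Dual F (Fin k → F) := b.toDualEquiv with he0
  have he : ∀ a x : Fin k → F, e a x = ∑ i, a i * x i := by
    intro a x
    have ha : a = ∑ i, a i • b i := by
      have h := b.sum_repr a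
      simp only [hb, Pi.basisFun_repr] at h
      exact h.symm
    calc e a x = ∑ i, a i • (e (b i) x) := by
          conv_lhs => rw [ha]
          simp [map_sum]
      _ = ∑ i, a i * x i := by
          refine Finset.sum_congr rfl fun i _ => ?_
          have h2 : e (b i) x = b.repr x i := by
            simpa [he0] using b.toDual_apply_right i x
          rw [h2]
          simp [hb, Pi.basisFun_repr, smul_eq_mul]
  set W := Submodule.span F
      ({x : Fin k → F | x ≠ 0 ∧ ∃ a ∈ S, ∑ i, a i * x i = 0} ∩ (H : Set (Fin k → F))) with hW
  have hWH : W ≤ H := Submodule.span_le.mpr fun x hx => hx.2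
  by_contra hne
  have hWlt : W < H := lt_of_le_of_ne hWH hne
  have hV : finrank F (Fin k → F) = k := Module.finrank_fin_fun F
  have hWle : finrank F W ≤ k - 2 := by
    have := Submodule.finrank_lt_finrank_of_lt hWlt
    omega
  have key : ∀ a ∈ S, LinearMap.ker (e a) ⊓ H = W := by
    intro a haS
    have hane : a ≠ 0 := hSsub.1 haS
    have hea : (e a : Module.Dual F (Fin k → F)) ≠ 0 := fun h0 =>
      hane (e.map_eq_zero_iff.mp h0)
    have hker : finrank F (LinearMap.ker (e a)) = k - 1 := by
      have := Module.Dual.finrank_ker_add_one_of_ne_zero hea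
      omega
    have hle : LinearMap.ker (e a) ⊓ H ≤ W := by
      intro x hx
      rcases hx with ⟨hx1, hx2⟩
      by_cases hx0 : x = 0
      · simp [hx0]
      · apply Submodule.subset_span
        refine ⟨⟨hx0, a, haS, ?_⟩, hx2⟩
        rw [← he a x]; exact hx1
    have hdimInf : k - 2 ≤ finrank F ↥(LinearMap.ker (e a) ⊓ H) := by
      have hsum := Submodule.finrank_sup_add_finrank_inf_eq (LinearMap.ker (e a)) H
      have hsup := Submodule.finrank_le (LinearMap.ker (e a) ⊔ H)
      omega
    exact Submodule.eq_of_le_of_finrank_le hle (le_trans hWle hdimInf)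
  obtain ⟨a₀, ha₀⟩ := hS
  have hWeq : finrank F W = k - 2 := by
    have h := key a₀ ha₀
    have hane : a₀ ≠ 0 := hSsub.1 ha₀
    have hea : (e a₀ : Module.Dual F (Fin k → F)) ≠ 0 := fun h0 =>
      hane (e.map_eq_zero_iff.mp h0)
    have hker := Module.Dual.finrank_ker_add_one_of_ne_zero hea
    have hsum := Submodule.finrank_sup_add_finrank_inf_eq (LinearMap.ker (e a₀)) H
    have hsup := Submodule.finrank_le (LinearMap.ker (e a₀) ⊔ H)
    rw [h] at hsum
    omega
  have hSsubU : Submodule.span F S ≤ (W.dualAnnihilator).comap e.toLinearMap := by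
    rw [Submodule.span_le]
    intro a haS
    simp only [Submodule.mem_comap, SetLike.mem_coe, LinearEquiv.coe_coe]
    rw [Submodule.mem_dualAnnihilator]
    intro w hw
    have hmem : w ∈ LinearMap.ker (e a) ⊓ H := by rw [key a haS]; exact hw
    exact hmem.1
  have hUfin : finrank F ((W.dualAnnihilator).comap e.toLinearMap) = 2 := by
    have h1 : (W.dualAnnihilator).comap e.toLinearMap
        = (W.dualAnnihilator).map e.symm.toLinearMap :=
      Submodule.comap_equiv_eq_map_symm e W.dualAnnihilator
    rw [h1, LinearEquiv.finrank_map_eq]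
    have h2 := LinearEquiv.finrank_eq (R := F) (M := (Fin k → F) ⧸ W)
      (N := ↥W.dualAnnihilator) (Subspace.quotEquivAnnihilator W)
    have h3 := Submodule.finrank_quotient_add_finrank W
    omega
  have hfin := Submodule.finrank_mono hSsubU
  omega
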